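/- arXiv:2109.00727 — 2 statements merged into one kernel-verified Lean document; each statement's English description precedes it below -/
import Mathlib

section
/- For any positive integer ℓ, there exists a set of 2^ℓ vectors b_1, …, b_{2^ℓ} in R^{2^{ℓ+1}}, each with entries in {0, 2^{−ℓ/2}}, such that ‖b_i‖ = 1 for all i, ⟨b_i, b_j⟩ = 1/2 for all i ≠ j, and, defining b̄_j := 2^{−ℓ/2}·𝟙 − b_j (where 𝟙 is the all-ones vector), ⟨b_i, b̄_j⟩ = 1/2 for all i ≠ j and ⟨b_i, b̄_i⟩ = 0. -/
set_option maxHeartbeats 1000000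

open Finset

private lemma zmod2_ne_zero' : ∀ a : ZMod 2, a ≠ 0 → a = 1 := by decide

private lemma zmod2_eq_iff' : ∀ a b : ZMod 2, a = b ↔ a + b = 0 := by decide

private lemma count_half {n : ℕ} (v : Fin n → ZMod 2) (hv : v ≠ 0) :
    ∑ y : Fin n → ZMod 2, (if (∑ t, v t * y t) = 0 then (1:ℝ) else 0) = 2 ^ n / 2 := by
  classical
  obtain ⟨t0, ht0⟩ : ∃ t, v t ≠ 0 := by
    by_contra h; push_neg at h; exact hv (funext h)
  have hv1 : v t0 = 1 := zmod2_ne_zero' _ ht0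
  set σ : (Fin n → ZMod 2) → (Fin n → ZMod 2) :=
    fun y => Function.update y t0 (y t0 + 1) with hσ
  have hinv : Function.Involutive σ := by
    intro y; funext x
    by_cases hx : x = t0
    · subst hx
      simp only [σ, Function.update_self]
      exact (by decide : ∀ a : ZMod 2, a + 1 + 1 = a) _
    · simp [σ, Function.update_of_ne hx]
  have hdot : ∀ y, (∑ t, v t * σ y t) = (∑ t, v t * y t) + 1 := by
    intro y
    have hfun : (fun t => v t * σ y t)
        = Function.update (fun t => v t * y t) t0 (v t0 * (y t0 + 1)) := by
      funext x
      by_cases hx : x = t0 <;> simp [σ, Function.update, hx]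
    calc (∑ t, v t * σ y t)
        = ∑ t, Function.update (fun t => v t * y t) t0 (v t0 * (y t0 + 1)) t := by
          rw [← hfun]
      _ = v t0 * (y t0 + 1) + ∑ t ∈ univ \ {t0}, v t * y t := by
          rw [Finset.sum_update_of_mem (mem_univ t0)]
      _ = ((fun t => v t * y t) t0 + ∑ t ∈ univ.erase t0, v t * y t) + 1 := by
          simp only [sdiff_singleton_eq_erase, hv1]; ring
      _ = (∑ t, v t * y t) + 1 := by
          rw [Finset.add_sum_erase univ (fun t => v t * y t) (mem_univ t0)]
  set f : (Fin n → ZMod 2) → ℝ := fun y => if (∑ t, v t * y t) = 0 then (1:ℝ) else 0 with hf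
  have h1 : ∑ y, f (σ y) = ∑ y, f y := Equiv.sum_comp hinv.toPerm f
  have h2 : ∀ y, f (σ y) = if (∑ t, v t * y t) = 1 then (1:ℝ) else 0 := by
    intro y
    simp only [f, hdot y]
    congr 1
    simp only [eq_iff_iff]
    exact (by decide : ∀ a : ZMod 2, (a + 1 = 0) ↔ a = 1) _
  have h3 : ∑ y, (f y + f (σ y)) = 2 ^ n := by
    have hone : ∀ y, f y + f (σ y) = 1 := by
      intro y
      rw [h2 y]
      simp only [f]
      by_cases h0 : (∑ t, v t * y t) = 0
      · rw [if_pos h0, if_neg (by rw [h0]; decide)]; norm_num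
      · rw [if_neg h0, if_pos (zmod2_ne_zero' _ h0)]; norm_num
    rw [Finset.sum_congr rfl (fun y _ => hone y), Finset.sum_const, card_univ]
    simp [ZMod.card]
  rw [Finset.sum_add_distrib, h1] at h3
  linarith

private lemma count_half' {n : ℕ} (v w : Fin n → ZMod 2) (hvw : v ≠ w) :
    ∑ y : Fin n → ZMod 2,
      (if (∑ t, v t * y t) = (∑ t, w t * y t) then (1:ℝ) else 0) = 2 ^ n / 2 := by
  have hsum : ∀ y : Fin n → ZMod 2,
      (∑ t, (v + w) t * y t) = (∑ t, v t * y t) + (∑ t, w t * y t) := by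
    intro y; simp [Pi.add_apply, add_mul, Finset.sum_add_distrib]
  have key : ∀ y : Fin n → ZMod 2, ((∑ t, v t * y t) = (∑ t, w t * y t))
      ↔ ((∑ t, (v + w) t * y t) = 0) := by
    intro y; rw [zmod2_eq_iff', hsum]
  simp only [key]
  exact count_half (v + w) (by
    intro h
    apply hvw
    funext t
    have := congrFun h t
    simp only [Pi.add_apply, Pi.zero_apply] at this
    exact (zmod2_eq_iff' _ _).2 this)

/-- The all-ones vector in `ℝ^m`. -/
noncomputable def allOnes (m : ℕ) : EuclideanSpace ℝ (Fin m) := WithLp.toLp 2 (fun _ => 1)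

/-- For any positive integer `ℓ`, there is a set of `2^ℓ` vectors in `ℝ^{2^{ℓ+1}}`, each with
entries in `{0, 2^{-ℓ/2}}`, with unit norms, pairwise inner products `1/2`, and such that the
complementary vectors `b̄_j = 2^{-ℓ/2}·𝟙 − b_j` satisfy `⟪b_i, b̄_j⟫ = 1/2` for `i ≠ j`
and `⟪b_i, b̄_i⟫ = 0`. -/
theorem stmt5 (ℓ : ℕ) (hℓ : 1 ≤ ℓ) :
    ∃ b : Fin (2 ^ ℓ) → EuclideanSpace ℝ (Fin (2 ^ (ℓ + 1))),
      (∀ i k, b i k = 0 ∨ b i k = (2 : ℝ) ^ (-(ℓ : ℝ) / 2)) ∧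
      (∀ i, ‖b i‖ = 1) ∧
      (∀ i j, i ≠ j → (inner ℝ (b i) (b j) : ℝ) = 1 / 2) ∧
      (∀ i j, i ≠ j →
        (inner ℝ (b i) ((2 : ℝ) ^ (-(ℓ : ℝ) / 2) • allOnes (2 ^ (ℓ + 1)) - b j) : ℝ) = 1 / 2) ∧
      (∀ i,
        (inner ℝ (b i) ((2 : ℝ) ^ (-(ℓ : ℝ) / 2) • allOnes (2 ^ (ℓ + 1)) - b i) : ℝ) = 0) := by
  classical
  set c : ℝ := (2 : ℝ) ^ (-(ℓ : ℝ) / 2) with hc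
  have hN : ((2:ℝ) ^ ℓ) ≠ 0 := by positivity
  have hcc : c * c = ((2:ℝ) ^ ℓ)⁻¹ := by
    rw [hc, ← Real.rpow_add two_pos]
    rw [show -(ℓ : ℝ) / 2 + -(ℓ : ℝ) / 2 = -(ℓ:ℝ) by ring]
    rw [Real.rpow_neg (by norm_num), Real.rpow_natCast]
  have cardI : Fintype.card (Fin ℓ → ZMod 2) = 2 ^ ℓ := by simp
  have cardV : Fintype.card ((Fin ℓ → ZMod 2) × ZMod 2) = 2 ^ (ℓ + 1) := by
    simp [pow_succ]
  set eI : Fin (2 ^ ℓ) ≃ (Fin ℓ → ZMod 2) := (Fintype.equivFinOfCardEq cardI).symm with heI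
  set eV : Fin (2 ^ (ℓ + 1)) ≃ ((Fin ℓ → ZMod 2) × ZMod 2) :=
    (Fintype.equivFinOfCardEq cardV).symm with heV
  set B : (Fin ℓ → ZMod 2) → EuclideanSpace ℝ (Fin (2 ^ (ℓ + 1))) :=
    fun v => WithLp.toLp 2 (fun k => if (∑ t, v t * (eV k).1 t) = (eV k).2 then c else 0) with hB
  have hsum2 : ∀ a b : ZMod 2,
      (∑ ε : ZMod 2, (if a = ε then c else 0) * (if b = ε then c else 0))
        = if a = b then c * c else 0 := by
    intro a b
    have hpt : ∀ ε : ZMod 2, (if a = ε then c else 0) * (if b = ε then c else 0)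
        = if a = ε then (if b = ε then c * c else 0) else 0 := by
      intro ε; by_cases h1 : a = ε <;> by_cases h2 : b = ε <;> simp [h1, h2]
    rw [Finset.sum_congr rfl (fun ε _ => hpt ε), Finset.sum_ite_eq]
    simp [eq_comm]
  have hsum1 : ∀ a : ZMod 2, (∑ ε : ZMod 2, (if a = ε then c else 0)) = c := by
    intro a; rw [Finset.sum_ite_eq]; simp
  have key : ∀ v w : Fin ℓ → ZMod 2,
      (inner ℝ (B v) (B w) : ℝ)
        = c * c * ∑ y : Fin ℓ → ZMod 2,
            (if (∑ t, v t * y t) = (∑ t, w t * y t) then (1:ℝ) else 0) := by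
    intro v w
    rw [PiLp.inner_apply]
    simp only [RCLike.inner_apply', conj_trivial, hB, PiLp.toLp_apply]
    calc (∑ k, (if (∑ t, v t * (eV k).1 t) = (eV k).2 then c else 0)
              * (if (∑ t, w t * (eV k).1 t) = (eV k).2 then c else 0))
        = ∑ p : (Fin ℓ → ZMod 2) × ZMod 2,
            (if (∑ t, v t * p.1 t) = p.2 then c else 0)
              * (if (∑ t, w t * p.1 t) = p.2 then c else 0) :=
          Fintype.sum_equiv eV _ _ (fun k => rfl)
      _ = ∑ y : Fin ℓ → ZMod 2, ∑ ε : ZMod 2,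
            (if (∑ t, v t * y t) = ε then c else 0)
              * (if (∑ t, w t * y t) = ε then c else 0) := by
          rw [Fintype.sum_prod_type]
      _ = ∑ y : Fin ℓ → ZMod 2,
            (if (∑ t, v t * y t) = (∑ t, w t * y t) then c * c else 0) := by
          exact Finset.sum_congr rfl (fun y _ => hsum2 _ _)
      _ = c * c * ∑ y : Fin ℓ → ZMod 2,
            (if (∑ t, v t * y t) = (∑ t, w t * y t) then (1:ℝ) else 0) := by
          rw [Finset.mul_sum]
          exact Finset.sum_congr rfl
            (fun y _ => by by_cases h : (∑ t, v t * y t) = (∑ t, w t * y t) <;> simp [h])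
  have keyOnes : ∀ v : Fin ℓ → ZMod 2,
      (inner ℝ (B v) (c • allOnes (2 ^ (ℓ + 1))) : ℝ) = 1 := by
    intro v
    rw [PiLp.inner_apply]
    simp only [RCLike.inner_apply', conj_trivial, hB, PiLp.toLp_apply]
    have hones : ∀ k, (c • allOnes (2 ^ (ℓ + 1))) k = c := by
      intro k; simp [allOnes]
    calc (∑ k, (if (∑ t, v t * (eV k).1 t) = (eV k).2 then c else 0)
              * (c • allOnes (2 ^ (ℓ + 1))) k)
        = ∑ k, (if (∑ t, v t * (eV k).1 t) = (eV k).2 then c else 0) * c := by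
          exact Finset.sum_congr rfl (fun k _ => by rw [hones])
      _ = ∑ p : (Fin ℓ → ZMod 2) × ZMod 2,
            (if (∑ t, v t * p.1 t) = p.2 then c else 0) * c :=
          Fintype.sum_equiv eV _ _ (fun k => rfl)
      _ = ∑ y : Fin ℓ → ZMod 2,
            (∑ ε : ZMod 2, (if (∑ t, v t * y t) = ε then c else 0)) * c := by
          rw [Fintype.sum_prod_type]
          exact Finset.sum_congr rfl (fun y _ => by rw [Finset.sum_mul])
      _ = ∑ y : Fin ℓ → ZMod 2, c * c := by
          exact Finset.sum_congr rfl (fun y _ => by rw [hsum1])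
      _ = 1 := by
          rw [Finset.sum_const, card_univ, cardI, hcc, nsmul_eq_mul]
          push_cast
          field_simp
  -- self inner product
  have keySelf : ∀ v : Fin ℓ → ZMod 2, (inner ℝ (B v) (B v) : ℝ) = 1 := by
    intro v
    rw [key v v]
    have : ∀ y : Fin ℓ → ZMod 2,
        (if (∑ t, v t * y t) = (∑ t, v t * y t) then (1:ℝ) else 0) = 1 := by
      intro y; simp
    rw [Finset.sum_congr rfl (fun y _ => this y), Finset.sum_const, card_univ, cardI,
      nsmul_eq_mul, hcc]
    push_cast
    field_simp
  -- distinct inner product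
  have keyNe : ∀ v w : Fin ℓ → ZMod 2, v ≠ w → (inner ℝ (B v) (B w) : ℝ) = 1 / 2 := by
    intro v w hvw
    rw [key v w, count_half' v w hvw, hcc]
    field_simp
  refine ⟨fun i => B (eI i), ?_, ?_, ?_, ?_, ?_⟩
  · intro i k
    by_cases h : (∑ t, eI i t * (eV k).1 t) = (eV k).2
    · right; simp [hB, h]
    · left; simp [hB, h]
  · intro i
    have h := keySelf (eI i)
    rw [real_inner_self_eq_norm_sq] at h
    calc ‖B (eI i)‖ = Real.sqrt (‖B (eI i)‖ ^ 2) := (Real.sqrt_sq (norm_nonneg _)).symm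
      _ = Real.sqrt 1 := by rw [h]
      _ = 1 := Real.sqrt_one
  · intro i j hij
    exact keyNe _ _ (fun h => hij (eI.injective h))
  · intro i j hij
    rw [inner_sub_right, keyOnes, keyNe _ _ (fun h => hij (eI.injective h))]
    norm_num
  · intro i
    rw [inner_sub_right, keyOnes, keySelf]
    norm_num
end

section
/- Suppose for a problem one can decide NP-hardly between max det ≥ 2^{λ_c n} and max det < 2^{λ_s n} with λ_c > λ_s. Then for any real p > 1/(λ_c − λ_s), writing q = p(λ_c − λ_s): if max_{S} det(A_S) ≥ 2^{λ_c n} then Z^p(A) ≥ 2^{λ_c p n}, and if max_S det(A_S) < 2^{λ_s n} then Z^p(A) < 2^{λ_s p n + n}; consequently the ratio of these two bounds is 2^{(q−1)n} > 1, so a 2^{(q−1)n}-approximation of Z^p(A) distinguishes the two cases. -/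
noncomputable def subdet {n : ℕ} (A : Matrix (Fin n) (Fin n) ℝ) (S : Finset (Fin n)) : ℝ :=
  (A.submatrix (fun i : S => (i : Fin n)) (fun i : S => (i : Fin n))).det

/-- With `q = p(λ_c − λ_s)`: if `max_S det(A_S) ≥ 2^{λ_c n}` then `Z^p(A) ≥ 2^{λ_c p n}`;
if `max_S det(A_S) < 2^{λ_s n}` then `Z^p(A) < 2^{λ_s p n + n}`; and the two thresholds satisfy
`2^{λ_c p n} = 2^{(q−1)n} · 2^{λ_s p n + n}`. -/
theorem stmt14 {n : ℕ} (A : Matrix (Fin n) (Fin n) ℝ) (hA : A.PosSemidef)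
    (lc ls p : ℝ) (hls : 0 < ls) (hlc : ls < lc) (hp : 1 / (lc - ls) < p) :
    ((∃ S : Finset (Fin n), (2 : ℝ) ^ (lc * n) ≤ subdet A S) →
        (2 : ℝ) ^ (lc * p * n) ≤ ∑ S : Finset (Fin n), subdet A S ^ p) ∧
    ((∀ S : Finset (Fin n), subdet A S < (2 : ℝ) ^ (ls * n)) →
        ∑ S : Finset (Fin n), subdet A S ^ p < (2 : ℝ) ^ (ls * p * n + n)) ∧
    (2 : ℝ) ^ (lc * p * n) =
      (2 : ℝ) ^ ((p * (lc - ls) - 1) * n) * (2 : ℝ) ^ (ls * p * n + n) := by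
  have hd : 0 < lc - ls := sub_pos.mpr hlc
  have hp0 : 0 < p := lt_trans (by positivity) hp
  have hsub : ∀ S : Finset (Fin n), 0 ≤ subdet A S := by
    intro S
    have h2 : (A.submatrix (fun i : S => (i : Fin n)) (fun i : S => (i : Fin n))).PosSemidef :=
      hA.submatrix _
    have := h2.isHermitian.det_eq_prod_eigenvalues
    rw [subdet, this]
    exact Finset.prod_nonneg fun i _ => h2.eigenvalues_nonneg i
  refine ⟨?_, ?_, ?_⟩
  · rintro ⟨S, hS⟩
    calc (2:ℝ) ^ (lc * p * n) = ((2:ℝ) ^ (lc * n)) ^ p := by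
          rw [← Real.rpow_mul (by norm_num)]; ring_nf
      _ ≤ subdet A S ^ p := Real.rpow_le_rpow (by positivity) hS hp0.le
      _ ≤ ∑ T : Finset (Fin n), subdet A T ^ p :=
          Finset.single_le_sum (f := fun T => subdet A T ^ p)
            (fun T _ => Real.rpow_nonneg (hsub T) p) (Finset.mem_univ S)
  · intro h
    calc ∑ S : Finset (Fin n), subdet A S ^ p
        < ∑ _S : Finset (Fin n), ((2:ℝ) ^ (ls * n)) ^ p :=
          Finset.sum_lt_sum_of_nonempty Finset.univ_nonempty
            (fun S _ => Real.rpow_lt_rpow (hsub S) (h S) hp0)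
      _ = (2:ℝ) ^ (ls * p * n + n) := by
          rw [Finset.sum_const, Finset.card_univ, Fintype.card_finset, Fintype.card_fin,
            ← Real.rpow_mul (by norm_num), Real.rpow_add (by norm_num : (0:ℝ) < 2),
            nsmul_eq_mul]
          push_cast
          rw [← Real.rpow_natCast (2:ℝ) n, ← Real.rpow_add (by norm_num : (0:ℝ) < 2),
            ← Real.rpow_add (by norm_num : (0:ℝ) < 2)]
          ring_nf
  · rw [← Real.rpow_add (by norm_num : (0:ℝ) < 2)]
    ring_nf
end
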